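/- The explicit upwind scheme n_j^{m+1} = n_j^m − (Δt/Δs)(n_j^m − n_{j−1}^m) − Δt·p(s_j, N^m)n_j^m for j ≥ 2, and n_1^{m+1} = n_1^m − (Δt/Δs)(n_1^m − N^m) − Δt·p(s_1,N^m)n_1^m, where N^m = Δs Σ_j p(s_j,N^m)n_j^m, conserves the discrete mass: Σ_j Δs·n_j^m = Σ_j Δs·n_j^0 for all m. -/

import Mathlib

open MeasureTheory Set

/-- the explicit upwind scheme for the ITM equation conserves the
discrete mass `Σ_j Δs n_j^m`. Cells are indexed by `j : ℕ` (cell `j` has center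
`s j = (j + 1/2)Δs`), the boundary cell `j = 0` uses the discharge value `N^m`
which solves the discrete fixed-point equation. -/
theorem upwind_mass_conservation
    (p : ℝ → ℝ → ℝ) (nn : ℕ → ℕ → ℝ) (N : ℕ → ℝ) (s : ℕ → ℝ) (Δt Δs : ℝ)
    (hΔt : 0 < Δt) (hΔs : 0 < Δs)
    (hs : ∀ j, s j = ((j : ℝ) + 1 / 2) * Δs)
    (hsum : ∀ m, Summable (nn m))
    (hsum' : ∀ m, Summable fun j => p (s j) (N m) * nn m j)
    (hN : ∀ m, N m = Δs * ∑' j, p (s j) (N m) * nn m j)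
    (hb : ∀ m, nn (m + 1) 0 =
        nn m 0 - Δt / Δs * (nn m 0 - N m) - Δt * p (s 0) (N m) * nn m 0)
    (hrec : ∀ m j, nn (m + 1) (j + 1) =
        nn m (j + 1) - Δt / Δs * (nn m (j + 1) - nn m j)
          - Δt * p (s (j + 1)) (N m) * nn m (j + 1)) :
    ∀ m, (∑' j, Δs * nn m j) = ∑' j, Δs * nn 0 j := by
  intro m
  induction m with
  | zero => rfl
  | succ m ih =>
    rw [← ih]
    have key : (∑' j, nn (m + 1) j) = ∑' j, nn m j := by
      set g : ℕ → ℝ := fun j => Nat.rec (N m) (fun j _ => nn m j) j with hg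
      have hg0 : g 0 = N m := rfl
      have hgs : ∀ j, g (j + 1) = nn m j := fun j => rfl
      have hgsum : Summable g := by
        rw [← summable_nat_add_iff 1]
        simpa [hgs] using hsum m
      have hform : ∀ j, nn (m + 1) j =
          nn m j - Δt / Δs * (nn m j - g j) - Δt * (p (s j) (N m) * nn m j) := by
        intro j
        cases j with
        | zero => simpa [hg0, mul_assoc] using hb m
        | succ j => simpa [hgs, mul_assoc] using hrec m j
      have h1 := hsum m
      have h2 := hsum' m
      have hG : (∑' j, g j) = N m + ∑' j, nn m j := by
        rw [Summable.tsum_eq_zero_add hgsum, hg0]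
      have hP : (∑' j, p (s j) (N m) * nn m j) = N m / Δs := by
        field_simp
        linarith [hN m]
      calc (∑' j, nn (m + 1) j)
          = ∑' j, (nn m j - Δt / Δs * (nn m j - g j)
              - Δt * (p (s j) (N m) * nn m j)) := tsum_congr hform
        _ = (∑' j, nn m j) - Δt / Δs * ((∑' j, nn m j) - ∑' j, g j)
              - Δt * ∑' j, p (s j) (N m) * nn m j := by
            rw [Summable.tsum_sub (h1.sub ((h1.sub hgsum).mul_left _)) (h2.mul_left Δt),
              Summable.tsum_sub h1 ((h1.sub hgsum).mul_left _), tsum_mul_left,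
              Summable.tsum_sub h1 hgsum, tsum_mul_left]
        _ = ∑' j, nn m j := by
            rw [hG, hP]
            field_simp
            ring
    rw [tsum_mul_left, tsum_mul_left, key]
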